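/- Let a, b ∈ ℝ with 0 < a < b, and define g(λ) = (1/2)·a·e^{2λ} − (1/3)·b·e^{3λ} for λ ∈ ℝ. Then λ* := log(a/b) satisfies λ* < 0 and g'(λ*) = 0; moreover g''(λ) ≤ 2·g'(λ) for every λ ∈ ℝ, and consequently g'(0) ≤ 2·(g(0) − g(λ*)). -/

import Mathlib

/-- For `0 < a < b` and `g(λ) = (1/2)a e^{2λ} - (1/3)b e^{3λ}`, the point `λ* = log(a/b)`
is negative and a critical point of `g`; moreover `g'' ≤ 2g'` everywhere, and consequently
`g'(0) ≤ 2(g(0) - g(λ*))`. -/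
theorem variational_scaling_estimate (a b : ℝ) (ha : 0 < a) (hab : a < b)
    (g : ℝ → ℝ)
    (hg : g = fun lam => 1 / 2 * a * Real.exp (2 * lam) - 1 / 3 * b * Real.exp (3 * lam)) :
    Real.log (a / b) < 0 ∧
    deriv g (Real.log (a / b)) = 0 ∧
    (∀ lam : ℝ, deriv (deriv g) lam ≤ 2 * deriv g lam) ∧
    deriv g 0 ≤ 2 * (g 0 - g (Real.log (a / b))) := by
  have hb : 0 < b := ha.trans hab
  have h2 : ∀ x : ℝ, HasDerivAt (fun x : ℝ => Real.exp (2 * x)) (Real.exp (2 * x) * 2) x := by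
    intro x
    simpa using ((hasDerivAt_id x).const_mul 2).exp
  have h3 : ∀ x : ℝ, HasDerivAt (fun x : ℝ => Real.exp (3 * x)) (Real.exp (3 * x) * 3) x := by
    intro x
    simpa using ((hasDerivAt_id x).const_mul 3).exp
  have hd1 : ∀ x : ℝ, HasDerivAt g (a * Real.exp (2 * x) - b * Real.exp (3 * x)) x := by
    intro x
    subst hg
    have := (((h2 x).const_mul (1 / 2 * a)).sub ((h3 x).const_mul (1 / 3 * b)))
    refine this.congr_deriv ?_
    ring
  have hdg : deriv g = fun x => a * Real.exp (2 * x) - b * Real.exp (3 * x) :=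
    funext fun x => (hd1 x).deriv
  have hd2 : ∀ x : ℝ, HasDerivAt (deriv g) (2 * a * Real.exp (2 * x) - 3 * b * Real.exp (3 * x)) x := by
    intro x
    rw [hdg]
    have := (((h2 x).const_mul a).sub ((h3 x).const_mul b))
    refine this.congr_deriv ?_
    ring
  set L := Real.log (a / b) with hL
  have hexpL : Real.exp L = a / b := Real.exp_log (div_pos ha hb)
  have hexp2 : Real.exp (2 * L) = (a / b) ^ 2 := by
    rw [show (2 : ℝ) = (2 : ℕ) by norm_num, Real.exp_nat_mul, hexpL]
  have hexp3 : Real.exp (3 * L) = (a / b) ^ 3 := by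
    rw [show (3 : ℝ) = (3 : ℕ) by norm_num, Real.exp_nat_mul, hexpL]
  refine ⟨?_, ?_, ?_, ?_⟩
  · exact Real.log_neg (div_pos ha hb) ((div_lt_one hb).2 hab)
  · rw [hdg]
    simp only [hexp2, hexp3]
    field_simp
    ring
  · intro lam
    rw [(hd2 lam).deriv, hdg]
    simp only
    nlinarith [Real.exp_pos (3 * lam), hb]
  · have hcube : a ^ 3 ≤ b ^ 3 := pow_le_pow_left₀ ha.le hab.le 3
    have final : a - b ≤ 2 * ((1/2*a - 1/3*b) - (1/2*a*(a/b)^2 - 1/3*b*(a/b)^3)) := by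
      have h1 : 1/2*a*(a/b)^2 - 1/3*b*(a/b)^3 = a^3/(6*b^2) := by
        field_simp; ring
      rw [h1]
      have h2' : a^3/(6*b^2) ≤ b/6 := by
        rw [div_le_div_iff₀ (by positivity) (by norm_num)]
        nlinarith
      linarith
    rw [hdg, hg]
    simp only [mul_zero, Real.exp_zero, mul_one, hexp2, hexp3]
    linarith [final]
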